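/- Let S be a commutative semiring with 0 and 1 and let n ≥ 1. The following are equivalent: (i) for every finite alphabet Σ, the quotient of the free monoid Σ* by the congruence (u ~ v if and only if the monoid identity u = v holds in UT_n(S)) is finite; (ii) there exist a finite alphabet Σ and words u, v ∈ Σ⁺ with distinct abelianizations (that is, the multisets of letters of u and v differ) such that φ(u) = φ(v) for every semigroup homomorphism φ from Σ⁺ to the multiplicative semigroup of S; (iii) there exist natural numbers i < j such that a^i = a^j for every a ∈ S. -/

import Mathlib

/-- The submonoid of upper triangular `n × n` matrices over `S`. -/
def UT (n : ℕ) (S : Type*) [CommSemiring S] : Submonoid (Matrix (Fin n) (Fin n) S) where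
  carrier := {A | ∀ i j : Fin n, j < i → A i j = 0}
  one_mem' := fun i j hij => Matrix.one_apply_ne (ne_of_gt hij)
  mul_mem' := by
    intro a b ha hb i j hij
    rw [Matrix.mul_apply]
    apply Finset.sum_eq_zero
    intro k _
    rcases lt_or_ge k i with h | h
    · rw [ha i k h, zero_mul]
    · rw [hb k j (lt_of_lt_of_le hij h), mul_zero]

/-- The congruence on the free monoid `Σ*` identifying `u` and `v` whenever the monoid
identity `u = v` holds in `UT_n(S)`. -/
def idCon (S : Type*) [CommSemiring S] (n : ℕ) (A : Type*) : Con (FreeMonoid A) where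
  r u v := ∀ φ : FreeMonoid A →* (UT n S), φ u = φ v
  iseqv := ⟨fun _ _ => rfl, fun h φ => (h φ).symm, fun h₁ h₂ φ => (h₁ φ).trans (h₂ φ)⟩
  mul' := fun h₁ h₂ φ => by rw [map_mul, map_mul, h₁ φ, h₂ φ]

/-- The abelianisation of a nonempty word: the multiset of its letters. -/
def abelianization {A : Type*} (u : FreeSemigroup A) : Multiset A :=
  ((u.head :: u.tail : List A) : Multiset A)


lemma pow_reduce {R : Type*} [Monoid R] {i j : ℕ} (hi : 1 ≤ i) (hij : i < j)
    (hR : ∀ a : R, a ^ i = a ^ j) (a : R) : ∀ e, ∃ e' < j, a ^ e = a ^ e' := by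
  intro e
  induction e using Nat.strong_induction_on with
  | _ e IH =>
    rcases lt_or_ge e j with h | h
    · exact ⟨e, h, rfl⟩
    · have h1 : a ^ e = a ^ (e - j + i) := by
        calc a ^ e = a ^ (e - j) * a ^ j := by rw [← pow_add]; congr 1; omega
        _ = a ^ (e - j) * a ^ i := by rw [hR]
        _ = a ^ (e - j + i) := by rw [pow_add]
      obtain ⟨e', he', heq⟩ := IH (e - j + i) (by omega)
      exact ⟨e', he', h1.trans heq⟩

lemma coeff_reduce {R : Type*} [CommSemiring R] {i j : ℕ} (hi : 1 ≤ i) (hij : i < j)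
    (hR : ∀ a : R, a ^ i = a ^ j) (x : R) : ∀ c : ℕ, ∃ c' : ℕ, c' < 2 ^ j ∧ (c : R) * x = (c' : R) * x := by
  have key : ((2 ^ j : ℕ) : R) * x = ((2 ^ i : ℕ) : R) * x := by
    push_cast
    rw [← hR 2]
  have h2 : (2:ℕ) ^ i < 2 ^ j := Nat.pow_lt_pow_right (by norm_num) hij
  intro c
  induction c using Nat.strong_induction_on with
  | _ c IH =>
    rcases lt_or_ge c (2 ^ j) with h | h
    · exact ⟨c, h, rfl⟩
    · have h1 : (c : R) * x = ((c - 2 ^ j + 2 ^ i : ℕ) : R) * x := by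
        have hc : c = (c - 2 ^ j) + 2 ^ j := by omega
        calc (c : R) * x = ((c - 2 ^ j : ℕ) : R) * x + ((2 ^ j : ℕ) : R) * x := by
              rw [← add_mul, ← Nat.cast_add, ← hc]
        _ = ((c - 2 ^ j : ℕ) : R) * x + ((2 ^ i : ℕ) : R) * x := by rw [key]
        _ = ((c - 2 ^ j + 2 ^ i : ℕ) : R) * x := by rw [Nat.cast_add, add_mul]
      obtain ⟨c', hc', heq⟩ := IH (c - 2 ^ j + 2 ^ i) (by omega)
      exact ⟨c', hc', h1.trans heq⟩

lemma closure_finite {R : Type*} [CommSemiring R] {i j : ℕ} (hi : 1 ≤ i) (hij : i < j)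
    (hR : ∀ a : R, a ^ i = a ^ j) (G : Finset R) :
    ((Subsemiring.closure (G : Set R)) : Set R).Finite := by
  classical
  have hj1 : 0 < j := by omega
  have hj2 : 2 ≤ j := by omega
  set Mon : Finset R :=
    (Finset.univ : Finset ({x // x ∈ G} → Fin j)).image
      (fun e => ∏ g ∈ G.attach, (g : R) ^ (e g : ℕ)) with hMon
  -- Mon is closed under multiplication
  have MonMul : ∀ x ∈ Mon, ∀ y ∈ Mon, x * y ∈ Mon := by
    intro x hx y hy
    obtain ⟨e1, -, rfl⟩ := Finset.mem_image.1 hx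
    obtain ⟨e2, -, rfl⟩ := Finset.mem_image.1 hy
    have hprod : (∏ g ∈ G.attach, (g : R) ^ (e1 g : ℕ)) * (∏ g ∈ G.attach, (g : R) ^ (e2 g : ℕ))
        = ∏ g ∈ G.attach, (g : R) ^ ((e1 g : ℕ) + (e2 g : ℕ)) := by
      rw [← Finset.prod_mul_distrib]
      exact Finset.prod_congr rfl fun g _ => (pow_add _ _ _).symm
    choose e3 he3lt he3eq using fun g : {x // x ∈ G} =>
      pow_reduce hi hij hR (g : R) ((e1 g : ℕ) + (e2 g : ℕ))
    refine Finset.mem_image.2 ⟨fun g => ⟨e3 g, he3lt g⟩, Finset.mem_univ _, ?_⟩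
    rw [hprod]
    exact Finset.prod_congr rfl fun g _ => (he3eq g).symm
  have MonOne : (1 : R) ∈ Mon := by
    refine Finset.mem_image.2 ⟨fun _ => (⟨0, hj1⟩ : Fin j), Finset.mem_univ _, ?_⟩
    simp
  have MonG : ∀ g ∈ G, g ∈ Mon := by
    intro g hg
    refine Finset.mem_image.2 ⟨fun g' => if g' = ⟨g, hg⟩ then (⟨1, hj2⟩ : Fin j) else ⟨0, hj1⟩,
      Finset.mem_univ _, ?_⟩
    rw [Finset.prod_eq_single_of_mem ⟨g, hg⟩ (G.mem_attach _)]
    · simp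
    · intro b _ hb
      simp [hb]
  -- the additive submonoid of coefficient combinations of monomials
  set T0 : AddSubmonoid R :=
    { carrier := {x | ∃ c : {m // m ∈ Mon} → ℕ, x = ∑ μ ∈ Mon.attach, (c μ : R) * (μ : R)}
      zero_mem' := ⟨0, by simp⟩
      add_mem' := by
        rintro x y ⟨c, rfl⟩ ⟨d, rfl⟩
        refine ⟨c + d, ?_⟩
        rw [← Finset.sum_add_distrib]
        exact Finset.sum_congr rfl fun μ _ => by simp only [Pi.add_apply]; push_cast; ring } with hT0
  have hmono : ∀ (k : ℕ) (m : R) (hm : m ∈ Mon), (k : R) * m ∈ T0 := by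
    intro k m hm
    refine ⟨fun μ => if μ = ⟨m, hm⟩ then k else 0, ?_⟩
    rw [Finset.sum_eq_single_of_mem ⟨m, hm⟩ (Mon.mem_attach _)]
    · simp
    · intro b _ hb
      simp [hb]
  have hclos : ∀ x ∈ Subsemiring.closure (G : Set R), x ∈ T0 := by
    intro x hx
    induction hx using Subsemiring.closure_induction with
    | mem x hx => simpa using hmono 1 x (MonG x hx)
    | zero => exact T0.zero_mem
    | one => simpa using hmono 1 1 MonOne
    | add x y hx hy ihx ihy => exact T0.add_mem ihx ihy
    | mul x y hx hy ihx ihy =>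
      obtain ⟨c, rfl⟩ := ihx
      obtain ⟨d, rfl⟩ := ihy
      rw [Finset.sum_mul_sum]
      refine T0.sum_mem fun μ _ => T0.sum_mem fun ν _ => ?_
      have : ((c μ : R) * (μ : R)) * ((d ν : R) * (ν : R))
          = ((c μ * d ν : ℕ) : R) * ((μ : R) * (ν : R)) := by push_cast; ring
      rw [this]
      exact hmono _ _ (MonMul _ μ.2 _ ν.2)
  -- reduce coefficients to get a finite superset
  set T : Finset R :=
    (Finset.univ : Finset ({m // m ∈ Mon} → Fin (2 ^ j))).image
      (fun c => ∑ μ ∈ Mon.attach, ((c μ : ℕ) : R) * (μ : R)) with hT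
  refine Set.Finite.subset T.finite_toSet ?_
  intro x hx
  obtain ⟨c, rfl⟩ := hclos x hx
  choose c' hc'lt hc'eq using fun μ : {m // m ∈ Mon} => coeff_reduce hi hij hR (μ : R) (c μ)
  refine Finset.mem_image.2 ⟨fun μ => ⟨c' μ, hc'lt μ⟩, Finset.mem_univ _, ?_⟩
  exact (Finset.sum_congr rfl fun μ _ => (hc'eq μ).symm)

lemma abelianization_of {A : Type*} (x : A) : abelianization (FreeSemigroup.of x) = {x} := rfl

lemma abelianization_mul {A : Type*} (u v : FreeSemigroup A) :
    abelianization (u * v) = abelianization u + abelianization v := by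
  simp [abelianization, FreeSemigroup.head_mul, FreeSemigroup.tail_mul]

/-- words x^(k+1) in the free semigroup -/
def wpow {A : Type*} (x : A) : ℕ → FreeSemigroup A
  | 0 => FreeSemigroup.of x
  | k + 1 => FreeSemigroup.of x * wpow x k

lemma abelianization_wpow {A : Type*} (x : A) (k : ℕ) :
    abelianization (wpow x k) = Multiset.replicate (k + 1) x := by
  induction k with
  | zero => rfl
  | succ k IH =>
    rw [wpow, abelianization_mul, IH, abelianization_of, Multiset.replicate_succ]
    rfl

lemma map_wpow {A : Type*} {S : Type*} [Monoid S] (φ : FreeSemigroup A →ₙ* S) (x : A) (k : ℕ) :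
    φ (wpow x k) = φ (FreeSemigroup.of x) ^ (k + 1) := by
  induction k with
  | zero => simp [wpow]
  | succ k IH => rw [wpow, map_mul, IH]; exact (pow_succ' _ _).symm

-- (iii) → (ii)
lemma two_of_three {S : Type*} [CommSemiring S] [Nontrivial S]
    (h : ∃ i j : ℕ, i < j ∧ ∀ a : S, a ^ i = a ^ j) :
    ∃ (A : Type) (_ : Fintype A) (u v : FreeSemigroup A),
      abelianization u ≠ abelianization v ∧ ∀ φ : FreeSemigroup A →ₙ* S, φ u = φ v := by
  obtain ⟨i, j, hij, hS⟩ := h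
  have hi : 1 ≤ i := by
    by_contra hi
    have h0 : (0 : S) ^ i = (0 : S) ^ j := hS 0
    rw [show i = 0 by omega, pow_zero, zero_pow (by omega : j ≠ 0)] at h0
    exact one_ne_zero h0
  refine ⟨Fin 1, inferInstance, wpow 0 (i - 1), wpow 0 (j - 1), ?_, ?_⟩
  · rw [abelianization_wpow, abelianization_wpow]
    intro hc
    have := congrArg Multiset.card hc
    rw [Multiset.card_replicate, Multiset.card_replicate] at this
    omega
  · intro φ
    rw [map_wpow, map_wpow, show i - 1 + 1 = i by omega, show j - 1 + 1 = j by omega]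
    exact hS _

-- (ii) → (iii)
lemma three_of_two {S : Type*} [CommSemiring S]
    (h : ∃ (A : Type) (_ : Fintype A) (u v : FreeSemigroup A),
      abelianization u ≠ abelianization v ∧ ∀ φ : FreeSemigroup A →ₙ* S, φ u = φ v) :
    ∃ i j : ℕ, i < j ∧ ∀ a : S, a ^ i = a ^ j := by
  classical
  obtain ⟨A, _, u, v, hab, h⟩ := h
  have : ∃ x : A, Multiset.count x (abelianization u) ≠ Multiset.count x (abelianization v) := by
    by_contra hc
    push_neg at hc
    exact hab (Multiset.ext.2 hc)
  obtain ⟨x, hx⟩ := this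
  have hval : ∀ a : S, a ^ Multiset.count x (abelianization u)
      = a ^ Multiset.count x (abelianization v) := by
    intro a
    set f : A → S := fun y => if y = x then a else 1 with hf
    set φ : FreeSemigroup A →ₙ* S := FreeSemigroup.lift f with hφ
    have hcount : ∀ w : FreeSemigroup A, φ w = a ^ Multiset.count x (abelianization w) := by
      intro w
      induction w using FreeSemigroup.recOnMul with
      | ih1 y =>
        rw [hφ, FreeSemigroup.lift_of, abelianization_of, hf]
        rcases eq_or_ne y x with hyx | hyx
        · simp [hyx]
        · simp [hyx, Ne.symm hyx, Multiset.count_singleton]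
      | ih2 p q ihp ihq =>
        rw [map_mul, ihp, ihq, abelianization_mul, Multiset.count_add, pow_add]
    have := h φ
    rw [hcount u, hcount v] at this
    exact this
  rcases lt_or_gt_of_ne hx with hlt | hlt
  · exact ⟨_, _, hlt, hval⟩
  · exact ⟨_, _, hlt, fun a => (hval a).symm⟩

-- (i) → (iii)
lemma three_of_one {S : Type*} [CommSemiring S] {n : ℕ} (hn : 1 ≤ n)
    (h : ∀ (A : Type) [Fintype A], Finite ((idCon S n A).Quotient)) :
    ∃ i j : ℕ, i < j ∧ ∀ a : S, a ^ i = a ^ j := by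
  haveI := h (Fin 1)
  have hni : ¬ Function.Injective
      (fun k : ℕ => ((FreeMonoid.of (0 : Fin 1)) ^ k : FreeMonoid (Fin 1)) 
        |> ((idCon S n (Fin 1)) : Con (FreeMonoid (Fin 1))).toQuotient) := by
    intro hinj
    exact (Finite.of_injective _ hinj).not_infinite (by infer_instance)
  rw [Function.not_injective_iff] at hni
  obtain ⟨k, l, hkl, hne⟩ := hni
  have hcon : (idCon S n (Fin 1)) ((FreeMonoid.of 0) ^ k) ((FreeMonoid.of 0) ^ l) :=
    (Con.eq _).1 hkl
  have key : ∀ B : UT n S, B ^ k = B ^ l := by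
    intro B
    have := hcon (FreeMonoid.lift (fun _ => B))
    rwa [map_pow, map_pow, FreeMonoid.lift_eval_of] at this
  have hval : ∀ a : S, a ^ k = a ^ l := by
    intro a
    set B : UT n S := ⟨Matrix.diagonal (fun _ => a), fun p q hpq =>
      Matrix.diagonal_apply_ne' _ (ne_of_lt hpq)⟩ with hB
    have h1 := congrArg (fun C : UT n S => (C : Matrix (Fin n) (Fin n) S)
      ⟨0, hn⟩ ⟨0, hn⟩) (key B)
    simp only [SubmonoidClass.coe_pow, hB, Matrix.diagonal_pow,
      Matrix.diagonal_apply_eq, Pi.pow_apply] at h1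
    exact h1
  rcases Nat.lt_or_ge k l with hlt | hge
  · exact ⟨k, l, hlt, hval⟩
  · have : l < k := by omega
    exact ⟨l, k, this, fun a => (hval a).symm⟩

lemma quot_finite {S : Type*} [CommSemiring S] {i j : ℕ} (hi : 1 ≤ i) (hij : i < j)
    (hS : ∀ a : S, a ^ i = a ^ j) (n : ℕ) (A : Type) [Fintype A] :
    Finite ((idCon S n A).Quotient) := by
  classical
  set R := (A → UT n S) → S with hRdef
  have hRtor : ∀ r : R, r ^ i = r ^ j := fun r => funext fun f => hS (r f)
  -- generic matrices
  set X : A → Matrix (Fin n) (Fin n) R :=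
    fun a p q => fun f => ((f a : Matrix (Fin n) (Fin n) S) p q) with hX
  set Θ : FreeMonoid A →* Matrix (Fin n) (Fin n) R := FreeMonoid.lift X with hΘdef
  set ev : (A → UT n S) → (R →+* S) := fun f => Pi.evalRingHom (fun _ => S) f with hev
  have key : ∀ (f : A → UT n S) (w : FreeMonoid A),
      ((FreeMonoid.lift f w : UT n S) : Matrix (Fin n) (Fin n) S) = (Θ w).map (ev f) := by
    intro f w
    have : (UT n S).subtype.comp (FreeMonoid.lift f)
        = ((ev f).mapMatrix.toMonoidHom).comp Θ := by
      apply FreeMonoid.hom_eq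
      intro a
      simp only [MonoidHom.comp_apply, Submonoid.coe_subtype, FreeMonoid.lift_eval_of,
        hΘdef, RingHom.toMonoidHom_eq_coe, MonoidHom.coe_coe, RingHom.mapMatrix_apply]
      ext p q
      rfl
    have := DFunLike.congr_fun this w
    simpa using this
  have hIff : ∀ u v : FreeMonoid A, idCon S n A u v ↔ Θ u = Θ v := by
    intro u v
    constructor
    · intro h
      ext p q f
      have h1 := congrArg (fun B : UT n S => (B : Matrix (Fin n) (Fin n) S) p q)
        (h (FreeMonoid.lift f))
      simp only [key f u, key f v, Matrix.map_apply] at h1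
      exact h1
    · intro h φ
      set f : A → UT n S := fun a => φ (FreeMonoid.of a) with hf
      have hφ : φ = FreeMonoid.lift f :=
        FreeMonoid.hom_eq fun a => by simp [hf]
      rw [hφ]
      apply Subtype.ext
      rw [key f u, key f v, h]
  -- entries lie in the closure of a finite set
  set Gset : Finset R :=
    (Finset.univ : Finset (A × Fin n × Fin n)).image
      (fun t => (fun f : A → UT n S => ((f t.1 : Matrix (Fin n) (Fin n) S) t.2.1 t.2.2))) with hG
  have hentries : ∀ (w : FreeMonoid A) (p q : Fin n),
      Θ w p q ∈ Subsemiring.closure (Gset : Set R) := by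
    intro w
    induction w using FreeMonoid.recOn with
    | one =>
      intro p q
      rw [map_one]
      rcases eq_or_ne p q with h | h
      · rw [h, Matrix.one_apply_eq]; exact Subsemiring.one_mem _
      · rw [Matrix.one_apply_ne h]; exact Subsemiring.zero_mem _
    | of_mul a xs IH =>
      intro p q
      rw [map_mul, hΘdef, FreeMonoid.lift_eval_of, Matrix.mul_apply]
      refine Subsemiring.sum_mem _ fun k _ => Subsemiring.mul_mem _ ?_ (IH k q)
      exact Subsemiring.subset_closure
        (Finset.mem_image.2 ⟨(a, p, k), Finset.mem_univ _, rfl⟩)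
  have hfin : ((Subsemiring.closure (Gset : Set R)) : Set R).Finite :=
    closure_finite hi hij hRtor Gset
  haveI : Finite ((Subsemiring.closure (Gset : Set R)) : Set R) := hfin.to_subtype
  set F : (idCon S n A).Quotient →
      (Fin n → Fin n → ((Subsemiring.closure (Gset : Set R)) : Set R)) :=
    fun x => Con.liftOn x (fun w p q => ⟨Θ w p q, hentries w p q⟩)
      (fun u v h => by
        have h2 := (hIff u v).1 h
        funext p q
        exact Subtype.ext (show Θ u p q = Θ v p q by rw [h2])) with hF
  have hFinj : Function.Injective F := by
    intro x y
    refine Con.induction_on₂ x y ?_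
    intro u v h
    rw [Con.eq]
    refine (hIff u v).2 ?_
    ext p q f
    have h3 := congrArg Subtype.val (congrFun (congrFun h p) q)
    exact congrFun h3 f
  exact Finite.of_injective F hFinj

/-- **Statement 16.** For a commutative semiring `S` and `n ≥ 1`, the following are
equivalent: (i) the monoid variety generated by `UT_n(S)` is locally finite (its finite
rank free objects are finite); (ii) `S` satisfies a multiplicative identity not implied by
commutativity (one whose two sides have distinct abelianizations); (iii) `S` satisfies a
multiplicative torsion identity `a^i = a^j`, `i < j`. -/
theorem locally_finite_tfae {S : Type*} [CommSemiring S] [Nontrivial S]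
    (n : ℕ) (hn : 1 ≤ n) :
    ((∀ (A : Type) [Fintype A], Finite ((idCon S n A).Quotient)) ↔
      (∃ (A : Type) (_ : Fintype A) (u v : FreeSemigroup A),
        abelianization u ≠ abelianization v ∧
          ∀ φ : FreeSemigroup A →ₙ* S, φ u = φ v)) ∧
    ((∃ (A : Type) (_ : Fintype A) (u v : FreeSemigroup A),
        abelianization u ≠ abelianization v ∧
          ∀ φ : FreeSemigroup A →ₙ* S, φ u = φ v) ↔
      (∃ i j : ℕ, i < j ∧ ∀ a : S, a ^ i = a ^ j)) := by
  constructor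
  · constructor
    · intro h1
      exact two_of_three (three_of_one hn h1)
    · intro h2
      obtain ⟨i, j, hij, hS⟩ := three_of_two h2
      have hi : 1 ≤ i := by
        by_contra hi0
        have h0 := hS 0
        rw [show i = 0 by omega, pow_zero, zero_pow (by omega : j ≠ 0)] at h0
        exact one_ne_zero h0
      intro A _
      exact quot_finite hi hij hS n A
  · exact ⟨three_of_two, two_of_three⟩
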